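/- Let X be a compact metric space with a uniquely ergodic homeomorphism T and invariant measure μ. Let (f_n) be a continuous subadditive cocycle over T with Lyapunov exponent Λ(f). Then for every ε > 0 there exist N ∈ ℕ and δ > 0 such that: for every continuous subadditive cocycle (g_n) over T satisfying sup_x |g_n(x) − f_n(x)| < δ for all n ≤ N, and every n ≥ N and every x ∈ X, one has (1/n) g_n(x) ≤ Λ(f) + ε. -/

import Mathlib

open MeasureTheory

section UUSLAux

open Filter Set NNReal ENNReal BoundedContinuousFunction Topology TopologicalSpace


private lemma double_sum_eq (F : ℕ → ℝ) (q m : ℕ) :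
    ∑ j ∈ Finset.range q, ∑ i ∈ Finset.range m, F (j * m + i)
      = ∑ k ∈ Finset.range (q * m), F k := by
  induction q with
  | zero => simp
  | succ q ih => rw [Finset.sum_range_succ, ih, Nat.succ_mul, Finset.sum_range_add]

private lemma level_upper (δ : ℝ≥0) (N : ℕ) (t : ℝ≥0) (ht : t ≤ (N : ℝ≥0) * δ) :
    t ≤ δ + ∑ i ∈ Finset.range N, (if ((i : ℝ≥0) + 1) * δ ≤ t then δ else 0) := by
  induction N with
  | zero =>
      simp only [Nat.cast_zero, zero_mul, nonpos_iff_eq_zero] at ht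
      simp [ht]
  | succ N ih =>
      by_cases hc : t ≤ (N : ℝ≥0) * δ
      · refine (ih hc).trans ?_
        rw [Finset.sum_range_succ]
        exact add_le_add_right le_self_add δ
      · push_neg at hc
        have hall : ∀ i ∈ Finset.range N,
            (if ((i : ℝ≥0) + 1) * δ ≤ t then δ else 0) = δ := by
          intro i hi
          rw [if_pos]
          have h1 : ((i : ℝ≥0) + 1) ≤ (N : ℝ≥0) := by
            exact_mod_cast Nat.succ_le_of_lt (Finset.mem_range.1 hi)
          exact le_trans (mul_le_mul_left h1 δ) hc.le
        have hsum : ∑ i ∈ Finset.range N,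
            (if ((i : ℝ≥0) + 1) * δ ≤ t then δ else 0) = (N : ℝ≥0) * δ := by
          rw [Finset.sum_congr rfl hall, Finset.sum_const, Finset.card_range, nsmul_eq_mul]
        have ht' : t ≤ (N : ℝ≥0) * δ + δ := by
          have : ((N + 1 : ℕ) : ℝ≥0) * δ = (N : ℝ≥0) * δ + δ := by push_cast; ring
          rw [← this]; exact ht
        calc t ≤ (N : ℝ≥0) * δ + δ := ht'
        _ ≤ δ + ∑ i ∈ Finset.range (N + 1), (if ((i : ℝ≥0) + 1) * δ ≤ t then δ else 0) := by
            rw [Finset.sum_range_succ, hsum, add_comm]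
            exact add_le_add_right le_self_add δ

private lemma level_lower (δ : ℝ≥0) (N : ℕ) (t : ℝ≥0) :
    ∑ i ∈ Finset.range N, (if ((i : ℝ≥0) + 1) * δ ≤ t then δ else 0) ≤ t := by
  have key : ∀ M : ℕ, ∑ i ∈ Finset.range M, (if ((i : ℝ≥0) + 1) * δ ≤ t then δ else 0)
      ≤ min t ((M : ℝ≥0) * δ) := by
    intro M
    induction M with
    | zero => simp
    | succ M ih =>
        rw [Finset.sum_range_succ]
        have hcast : ((M + 1 : ℕ) : ℝ≥0) * δ = (M : ℝ≥0) * δ + δ := by push_cast; ring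
        by_cases hc : ((M : ℝ≥0) + 1) * δ ≤ t
        · rw [if_pos hc]
          refine le_min ?_ ?_
          · calc _ ≤ (M : ℝ≥0) * δ + δ := add_le_add_left (ih.trans (min_le_right _ _)) δ
            _ = ((M : ℝ≥0) + 1) * δ := by ring
            _ ≤ t := hc
          · rw [hcast]
            exact add_le_add_left (ih.trans (min_le_right _ _)) δ
        · rw [if_neg hc, add_zero]
          refine ih.trans (min_le_min le_rfl ?_)
          rw [hcast]; exact le_self_add
  exact (key N).trans (min_le_left _ _)

private lemma block_bound {X : Type*} (T : X → X) (g : ℕ → X → ℝ) (m : ℕ) (hm : 1 ≤ m)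
    (hsub : ∀ n k, 1 ≤ n → 1 ≤ k → ∀ x, g (n + k) x ≤ g n x + g k (T^[n] x)) :
    ∀ q s x, 1 ≤ s → g (q * m + s) x
      ≤ (∑ j ∈ Finset.range q, g m (T^[j * m] x)) + g s (T^[q * m] x) := by
  intro q
  induction q with
  | zero => intro s x hs; simp
  | succ q ih =>
      intro s x hs
      have h1 : g ((q + 1) * m + s) x ≤ g m x + g (q * m + s) (T^[m] x) := by
        have := hsub m (q * m + s) hm (by omega) x
        calc g ((q + 1) * m + s) x = g (m + (q * m + s)) x := by ring_nf
        _ ≤ g m x + g (q * m + s) (T^[m] x) := this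
      refine h1.trans ?_
      have h2 := ih s (T^[m] x) hs
      have h3 : ∀ j : ℕ, T^[j * m] (T^[m] x) = T^[(j + 1) * m] x := by
        intro j
        rw [add_mul, one_mul]
        exact (Function.iterate_add_apply T (j * m) m x).symm
      calc g m x + g (q * m + s) (T^[m] x)
          ≤ g m x + ((∑ j ∈ Finset.range q, g m (T^[j * m] (T^[m] x))) + g s (T^[q * m] (T^[m] x))) :=
            add_le_add_right h2 _
      _ = (∑ j ∈ Finset.range (q + 1), g m (T^[j * m] x)) + g s (T^[(q + 1) * m] x) := by
          rw [Finset.sum_range_succ' (fun j => g m (T^[j * m] x)) q]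
          simp only [h3, zero_mul, Function.iterate_zero_apply]
          ring

private lemma avg_bound {X : Type*} (T : X → X) (g : ℕ → X → ℝ) (m : ℕ) (hm : 1 ≤ m)
    (hsub : ∀ n k, 1 ≤ n → 1 ≤ k → ∀ x, g (n + k) x ≤ g n x + g k (T^[n] x))
    (Cg : ℝ) (hCg : ∀ l, 1 ≤ l → l ≤ 3 * m → ∀ y, |g l y| ≤ Cg)
    (n : ℕ) (hn : 3 * m ≤ n) (x : X) :
    (m : ℝ) * g n x ≤ (∑ k ∈ Finset.range n, g m (T^[k] x)) + 5 * m * Cg := by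
  obtain ⟨d, hd⟩ : ∃ d, n / m = d := ⟨_, rfl⟩
  obtain ⟨r, hr⟩ : ∃ r, n % m = r := ⟨_, rfl⟩
  have hrm : r < m := hr ▸ Nat.mod_lt _ (by omega)
  have hdm : m * d + r = n := by rw [← hd, ← hr]; exact Nat.div_add_mod n m
  have hd3 : 3 ≤ d := by
    rw [← hd]; exact (Nat.le_div_iff_mul_le (by omega)).2 (by omega)
  set q := d - 2 with hq
  have e1 : q * m + 2 * m = d * m := by
    rw [← Nat.add_mul]; congr 1; omega
  have e2 : d * m + r = n := by rw [mul_comm]; exact hdm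
  have hq1 : 1 ≤ q := by omega
  set t := r + 2 * m with ht
  have hnt : q * m + t = n := by
    calc q * m + (r + 2 * m) = (q * m + 2 * m) + r := by ring
    _ = d * m + r := by rw [e1]
    _ = n := e2
  have hCg0 : 0 ≤ Cg := le_trans (abs_nonneg _) (hCg m hm (by omega) x)
  have hper : ∀ i, i < m → g n x ≤ 2 * Cg + ∑ j ∈ Finset.range q, g m (T^[j * m + i] x) := by
    intro i hi
    rcases Nat.eq_zero_or_pos i with hi0 | hi1
    · subst hi0
      have h1 := block_bound T g m hm hsub q t x (by omega)
      rw [hnt] at h1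
      have h2 := abs_le.1 (hCg t (by omega) (by omega) (T^[q * m] x))
      have h3 : ∑ j ∈ Finset.range q, g m (T^[j * m] x)
          = ∑ j ∈ Finset.range q, g m (T^[j * m + 0] x) := by simp
      rw [h3] at h1
      linarith [h1, h2.2]
    · set s := t - i with hs
      have hs1 : 1 ≤ s := by omega
      have hs3 : s ≤ 3 * m := by omega
      have his : i + s = t := by omega
      have hni : i + (q * m + s) = n := by
        calc i + (q * m + s) = q * m + (i + s) := by ring
        _ = q * m + t := by rw [his]
        _ = n := hnt
      have hdec : g n x ≤ g i x + g (q * m + s) (T^[i] x) := by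
        rw [← hni]; exact hsub i (q * m + s) hi1 (by omega) x
      have hblk := block_bound T g m hm hsub q s (T^[i] x) hs1
      have hit : ∀ j : ℕ, T^[j * m] (T^[i] x) = T^[j * m + i] x :=
        fun j => (Function.iterate_add_apply T (j * m) i x).symm
      rw [show (∑ j ∈ Finset.range q, g m (T^[j * m] (T^[i] x)))
          = ∑ j ∈ Finset.range q, g m (T^[j * m + i] x) from Finset.sum_congr rfl
            (fun j _ => by rw [hit j])] at hblk
      have hb1 := abs_le.1 (hCg i hi1 (by omega) x)
      have hb2 := abs_le.1 (hCg s hs1 hs3 (T^[q * m] (T^[i] x)))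
      linarith [hdec, hblk, hb1.2, hb2.2]
  have hsum1 : (m : ℝ) * g n x
      ≤ (m : ℝ) * (2 * Cg) + ∑ i ∈ Finset.range m, ∑ j ∈ Finset.range q, g m (T^[j * m + i] x) := by
    have h1 : ∑ _i ∈ Finset.range m, g n x
        ≤ ∑ i ∈ Finset.range m, (2 * Cg + ∑ j ∈ Finset.range q, g m (T^[j * m + i] x)) :=
      Finset.sum_le_sum fun i hi => hper i (Finset.mem_range.1 hi)
    rw [Finset.sum_const, Finset.card_range, nsmul_eq_mul, Finset.sum_add_distrib,
      Finset.sum_const, Finset.card_range, nsmul_eq_mul, ← mul_assoc] at h1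
    calc (m : ℝ) * g n x ≤ (m:ℝ) * 2 * Cg + ∑ i ∈ Finset.range m, ∑ j ∈ Finset.range q, g m (T^[j * m + i] x) := h1
    _ = _ := by ring
  have hswap : ∑ i ∈ Finset.range m, ∑ j ∈ Finset.range q, g m (T^[j * m + i] x)
      = ∑ k ∈ Finset.range (q * m), g m (T^[k] x) := by
    rw [Finset.sum_comm]
    exact double_sum_eq (fun k => g m (T^[k] x)) q m
  have htail : ∑ k ∈ Finset.range (q * m), g m (T^[k] x)
      ≤ (∑ k ∈ Finset.range n, g m (T^[k] x)) + 3 * m * Cg := by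
    have hdec : ∑ k ∈ Finset.range n, g m (T^[k] x)
        = (∑ k ∈ Finset.range (q * m), g m (T^[k] x))
          + ∑ k ∈ Finset.range t, g m (T^[q * m + k] x) := by
      rw [← hnt, Finset.sum_range_add]
    have hlow : ∀ k ∈ Finset.range t, -Cg ≤ g m (T^[q * m + k] x) := fun k _ =>
      (abs_le.1 (hCg m hm (by omega) _)).1
    have h2 : (t : ℝ) * (-Cg) ≤ ∑ k ∈ Finset.range t, g m (T^[q * m + k] x) := by
      calc (t : ℝ) * (-Cg) = ∑ _k ∈ Finset.range t, (-Cg) := by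
            rw [Finset.sum_const, Finset.card_range, nsmul_eq_mul]
      _ ≤ _ := Finset.sum_le_sum hlow
    have htm : (t : ℝ) ≤ 3 * m := by exact_mod_cast Nat.cast_le.2 (show t ≤ 3 * m by omega)
    have h3 : (t : ℝ) * Cg ≤ 3 * m * Cg := mul_le_mul_of_nonneg_right htm hCg0
    linarith
  rw [hswap] at hsum1
  nlinarith [hsum1, htail]

private lemma key_unif
    {X : Type*} [MetricSpace X] [CompactSpace X] [MeasurableSpace X] [BorelSpace X]
    (T : X ≃ₜ X) (μ : Measure X) [IsProbabilityMeasure μ]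
    (huniq : ∀ ν : Measure X, IsProbabilityMeasure ν → MeasurePreserving T ν ν → ν = μ)
    (φ : X → ℝ) (hφ : Continuous φ) (ε : ℝ) (hε : 0 < ε) :
    ∃ N : ℕ, ∀ n ≥ N, ∀ x : X,
      ∑ k ∈ Finset.range n, φ ((⇑T)^[k] x) ≤ n * (∫ y, φ y ∂μ + ε) := by
  by_contra hcon
  push_neg at hcon
  choose n hn x hx using fun k => hcon (k + 1)
  haveI : Nonempty X := ⟨x 0⟩
  have hn1 : ∀ k, 1 ≤ n k := fun k => le_trans (by omega) (hn k)
  have hnR : ∀ k, ((n k : ℝ≥0)) ≠ 0 := fun k =>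
    Nat.cast_ne_zero.2 (by have := hn1 k; omega)
  set U : Ultrafilter ℕ := Ultrafilter.of atTop with hU
  have hUle : (U : Filter ℕ) ≤ atTop := Ultrafilter.of_le _
  have hnatTop : Tendsto n atTop atTop :=
    tendsto_atTop_mono (fun k => le_trans (Nat.le_succ k) (hn k)) tendsto_id
  set u : (X →ᵇ ℝ≥0) → ℕ → ℝ≥0 :=
    fun f k => (∑ j ∈ Finset.range (n k), f ((⇑T)^[j] (x k))) / (n k) with hu
  have hsup : ∀ f : X →ᵇ ℝ≥0, ∃ M : ℝ≥0, ∀ y, f y ≤ M := fun f => by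
    obtain ⟨z, -, hz⟩ := isCompact_univ.exists_isMaxOn univ_nonempty f.continuous.continuousOn
    exact ⟨f z, fun y => hz (mem_univ y)⟩
  have hub : ∀ (f : X →ᵇ ℝ≥0) (M : ℝ≥0), (∀ y, f y ≤ M) → ∀ k, u f k ≤ M := by
    intro f M hM k
    have h1 : ∑ j ∈ Finset.range (n k), f ((⇑T)^[j] (x k)) ≤ (n k : ℝ≥0) * M := by
      calc ∑ j ∈ Finset.range (n k), f ((⇑T)^[j] (x k))
          ≤ ∑ _j ∈ Finset.range (n k), M := Finset.sum_le_sum fun j _ => hM _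
      _ = (n k : ℝ≥0) * M := by rw [Finset.sum_const, Finset.card_range, nsmul_eq_mul]
    rw [hu]
    exact (div_le_iff₀ (zero_lt_iff.mpr (hnR k))).2 (by rwa [mul_comm] at h1)
  have hex : ∀ f : X →ᵇ ℝ≥0, ∃ a, Tendsto (u f) (U : Filter ℕ) (nhds a) := by
    intro f
    obtain ⟨M, hM⟩ := hsup f
    have hmem : ∀ k, u f k ∈ Icc (0 : ℝ≥0) M := fun k => ⟨zero_le, hub f M hM k⟩
    obtain ⟨a, -, ha⟩ := (isCompact_Icc (a := (0:ℝ≥0)) (b := M)).ultrafilter_le_nhds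
      (U.map (u f)) (by
        rw [Ultrafilter.coe_map]
        exact le_principal_iff.2 (mem_map.2 (univ_mem' hmem)))
    exact ⟨a, by rwa [Ultrafilter.coe_map] at ha⟩
  set Λ : (X →ᵇ ℝ≥0) → ℝ≥0 := fun f => (hex f).choose with hΛdef
  have hΛ : ∀ f, Tendsto (u f) (U : Filter ℕ) (nhds (Λ f)) := fun f => (hex f).choose_spec
  haveI : (U : Filter ℕ).NeBot := U.neBot
  -- additivity
  have hadd : ∀ f g, Λ (f + g) = Λ f + Λ g := by
    intro f g
    refine tendsto_nhds_unique (hΛ (f + g)) (((hΛ f).add (hΛ g)).congr fun k => ?_)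
    simp only [hu, BoundedContinuousFunction.coe_add, Pi.add_apply, Finset.sum_add_distrib]
    rw [add_div]
  have hsmul : ∀ (c : ℝ≥0) f, Λ (c • f) = c * Λ f := by
    intro c f
    refine tendsto_nhds_unique (hΛ (c • f)) ((((hΛ f).const_mul c)).congr fun k => ?_)
    simp only [hu, BoundedContinuousFunction.coe_smul, Pi.smul_apply, smul_eq_mul]
    rw [← Finset.mul_sum, mul_div_assoc]
  have hmono : ∀ f g : X →ᵇ ℝ≥0, (∀ y, f y ≤ g y) → Λ f ≤ Λ g := by
    intro f g hle
    refine le_of_tendsto_of_tendsto' (hΛ f) (hΛ g) fun k => ?_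
    simp only [hu, div_eq_mul_inv]
    exact mul_le_mul_left (Finset.sum_le_sum fun j _ => hle _) _
  have hone : Λ 1 = 1 := by
    refine tendsto_nhds_unique (hΛ 1) (tendsto_const_nhds.congr fun k => ?_)
    simp only [hu, BoundedContinuousFunction.coe_one, Pi.one_apply, Finset.sum_const,
      Finset.card_range, nsmul_eq_mul, mul_one]
    exact (div_self (hnR k)).symm
  -- invariance
  have hcomp : ∀ f : X →ᵇ ℝ≥0, Λ (f.compContinuous (T : C(X, X))) = Λ f := by
    intro f
    obtain ⟨M, hM⟩ := hsup f
    set fT := f.compContinuous (T : C(X, X)) with hfT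
    have hptw : ∀ k, u fT k + f (x k) / (n k : ℝ≥0)
        = u f k + f ((⇑T)^[n k] (x k)) / (n k : ℝ≥0) := by
      intro k
      have h1 : ∀ j, fT ((⇑T)^[j] (x k)) = f ((⇑T)^[j + 1] (x k)) := fun j => by
        simp [hfT, Function.iterate_succ_apply']
      have hsum : (∑ j ∈ Finset.range (n k), fT ((⇑T)^[j] (x k))) + f (x k)
          = (∑ j ∈ Finset.range (n k), f ((⇑T)^[j] (x k))) + f ((⇑T)^[n k] (x k)) := by
        calc (∑ j ∈ Finset.range (n k), fT ((⇑T)^[j] (x k))) + f (x k)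
            = (∑ j ∈ Finset.range (n k), f ((⇑T)^[j + 1] (x k))) + f ((⇑T)^[0] (x k)) := by
              rw [Finset.sum_congr rfl fun j _ => h1 j]; rfl
        _ = ∑ j ∈ Finset.range (n k + 1), f ((⇑T)^[j] (x k)) :=
              (Finset.sum_range_succ' (fun j => f ((⇑T)^[j] (x k))) (n k)).symm
        _ = _ := Finset.sum_range_succ _ _
      rw [hu]
      simp only []
      rw [← add_div, ← add_div, hsum]
    have hz : Tendsto (fun k => M / ((n k : ℝ≥0))) (U : Filter ℕ) (nhds 0) := by
      have h2 : Tendsto (fun k => M / ((n k : ℝ≥0))) atTop (nhds 0) := by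
        have := (tendsto_const_div_atTop_nhds_zero_nat M).comp hnatTop
        exact this
      exact h2.mono_left hUle
    have hsq : ∀ (w : ℕ → X), Tendsto (fun k => f (w k) / (n k : ℝ≥0)) (U : Filter ℕ) (nhds 0) := by
      intro w
      refine tendsto_of_tendsto_of_tendsto_of_le_of_le tendsto_const_nhds hz
        (fun k => zero_le) (fun k => ?_)
      rw [div_eq_mul_inv, div_eq_mul_inv]
      exact mul_le_mul_left (hM _) _
    have e1 : Tendsto (fun k => u fT k + f (x k) / (n k : ℝ≥0)) (U : Filter ℕ)
        (nhds (Λ fT + 0)) := (hΛ fT).add (hsq x)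
    have e2 : Tendsto (fun k => u f k + f ((⇑T)^[n k] (x k)) / (n k : ℝ≥0)) (U : Filter ℕ)
        (nhds (Λ f + 0)) := (hΛ f).add (hsq _)
    have := tendsto_nhds_unique e1 (e2.congr fun k => (hptw k).symm)
    simpa using this
  set Λlin : CompactlySupportedContinuousMap X ℝ≥0 →ₗ[ℝ≥0] ℝ≥0 :=
    { toFun := fun g => Λ g.toBoundedContinuousFunction
      map_add' := fun g₁ g₂ => by rw [← hadd]; exact congrArg Λ (by ext y; simp)
      map_smul' := fun c g => by
        rw [RingHom.id_apply, smul_eq_mul, ← hsmul]; exact congrArg Λ (by ext y; simp) } with hΛlin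
  have hΛlinapp : ∀ f, Λlin f = Λ f.toBoundedContinuousFunction := fun f => rfl
  have hsupdisj : ∀ K₁ K₂ : Compacts X, Disjoint (K₁ : Set X) (K₂ : Set X) →
      rieszContentAux Λlin (K₁ ⊔ K₂) = rieszContentAux Λlin K₁ + rieszContentAux Λlin K₂ := by
    intro K₁ K₂ hd
    exact rieszContentAux_union Λlin hd
  set Co : MeasureTheory.Content X :=
    { toFun := rieszContentAux Λlin
      mono' := fun K₁ K₂ h => rieszContentAux_mono Λlin h
      sup_disjoint' := fun K₁ K₂ hd _ _ => hsupdisj K₁ K₂ hd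
      sup_le' := fun K₁ K₂ => rieszContentAux_sup_le Λlin K₁ K₂ } with hCo
  set ν : Measure X := Co.measure with hν
  have hCinv : ∀ K : Compacts X,
      rieszContentAux Λlin (K.map ⇑T T.continuous) = rieszContentAux Λlin K := by
    intro K
    apply le_antisymm
    · refine le_csInf (rieszContentAux_image_nonempty Λlin K) ?_
      rintro b ⟨f2, hf2, rfl⟩
      set f3 : CompactlySupportedContinuousMap X ℝ≥0 :=
        CompactlySupportedContinuousMap.continuousMapEquiv
          ⟨fun y => f2 (T.symm y), f2.continuous.comp T.symm.continuous⟩ with hf3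
      have hg : ∀ y ∈ (K.map ⇑T T.continuous), (1 : ℝ≥0) ≤ f3 y := by
        rintro y ⟨z, hz, rfl⟩
        simpa [hf3] using hf2 z hz
      refine le_trans (rieszContentAux_le Λlin hg) (le_of_eq ?_)
      have hid : (f3.toBoundedContinuousFunction).compContinuous (T : C(X, X))
          = f2.toBoundedContinuousFunction := by
        ext y; simp [hf3]
      calc Λlin f3
          = Λ ((f3.toBoundedContinuousFunction).compContinuous (T : C(X, X))) :=
            (hcomp _).symm
      _ = Λlin f2 := by rw [hid]; exact (hΛlinapp f2).symm
    · refine le_csInf (rieszContentAux_image_nonempty Λlin (K.map ⇑T T.continuous)) ?_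
      rintro b ⟨f2, hf2, rfl⟩
      set f3 : CompactlySupportedContinuousMap X ℝ≥0 :=
        CompactlySupportedContinuousMap.continuousMapEquiv
          ⟨fun y => f2 (T y), f2.continuous.comp T.continuous⟩ with hf3
      have hg : ∀ y ∈ K, (1 : ℝ≥0) ≤ f3 y := by
        intro y hy
        simpa [hf3] using hf2 (T y) ⟨y, hy, rfl⟩
      refine le_trans (rieszContentAux_le Λlin hg) ?_
      have hid : f3.toBoundedContinuousFunction
          = f2.toBoundedContinuousFunction.compContinuous (T : C(X, X)) := by
        ext y; simp [hf3]
      exact le_of_eq ((congrArg Λ hid).trans (hcomp _))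
  have hinner : ∀ (Uo : Set X) (hUo : IsOpen Uo),
      Co.innerContent ⟨⇑T ⁻¹' Uo, hUo.preimage T.continuous⟩ = Co.innerContent ⟨Uo, hUo⟩ := by
    intro Uo hUo
    apply le_antisymm
    · simp only [Content.innerContent]
      refine iSup₂_le fun K hK => ?_
      have h1 : ((K.map ⇑T T.continuous : Compacts X) : Set X) ⊆ Uo := by
        rw [Compacts.coe_map]
        exact image_subset_iff.2 hK
      have h2 : (Co K : ℝ≥0∞) = Co (K.map ⇑T T.continuous) := by
        exact ENNReal.coe_inj.mpr (hCinv K).symm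
      exact le_iSup₂_of_le (K.map ⇑T T.continuous) h1 (le_of_eq h2)
    · simp only [Content.innerContent]
      refine iSup₂_le fun K hK => ?_
      set K' : Compacts X := K.map ⇑T.symm T.symm.continuous with hK'
      have h1 : (K' : Set X) ⊆ ⇑T ⁻¹' Uo := by
        rintro y ⟨z, hz, rfl⟩
        simpa using hK hz
      have hKK : K'.map ⇑T T.continuous = K := by
        apply Compacts.ext
        rw [Compacts.coe_map, hK', Compacts.coe_map]
        ext z
        simp
      have h2 : (Co K : ℝ≥0∞) = Co K' := by
        conv_lhs => rw [← hKK]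
        exact ENNReal.coe_inj.mpr (hCinv K')
      exact le_iSup₂_of_le K' h1 (le_of_eq h2)
  have houter : ∀ s : Set X, Co.outerMeasure (⇑T ⁻¹' s) = Co.outerMeasure s := by
    intro s
    rw [Co.outerMeasure_eq_iInf, Co.outerMeasure_eq_iInf]
    apply le_antisymm
    · refine le_iInf fun Uo => le_iInf fun hUo => le_iInf fun hsU => ?_
      refine le_trans (iInf_le_of_le (⇑T ⁻¹' Uo) (iInf_le_of_le (hUo.preimage T.continuous)
        (iInf_le_of_le (preimage_mono hsU) le_rfl))) ?_
      exact le_of_eq (hinner Uo hUo)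
    · refine le_iInf fun V => le_iInf fun hV => le_iInf fun hsV => ?_
      have hUo : IsOpen (⇑T.symm ⁻¹' V) := hV.preimage T.symm.continuous
      have hsub : s ⊆ ⇑T.symm ⁻¹' V := by
        intro y hy
        have h3 : T.symm y ∈ ⇑T ⁻¹' s := by simp [hy]
        exact hsV h3
      have hTV : ⇑T ⁻¹' (⇑T.symm ⁻¹' V) = V := by ext y; simp
      have hOeq : (⟨⇑T ⁻¹' (⇑T.symm ⁻¹' V), hUo.preimage T.continuous⟩ : Opens X)
          = ⟨V, hV⟩ := Opens.ext hTV
      refine le_trans (iInf_le_of_le (⇑T.symm ⁻¹' V) (iInf_le_of_le hUo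
        (iInf_le_of_le hsub le_rfl))) ?_
      refine le_of_eq ?_
      rw [← hOeq]
      exact (hinner (⇑T.symm ⁻¹' V) hUo).symm
  have hlamle1 : ∀ K : Compacts X, rieszContentAux Λlin K ≤ 1 := by
    intro K
    have h1 : ∀ y ∈ K, (1 : ℝ≥0)
        ≤ (CompactlySupportedContinuousMap.continuousMapEquiv (1 : C(X, ℝ≥0))) y :=
      fun y _ => by simp
    calc rieszContentAux Λlin K
        ≤ Λlin (CompactlySupportedContinuousMap.continuousMapEquiv (1 : C(X, ℝ≥0))) :=
          rieszContentAux_le Λlin h1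
    _ = 1 := by rw [hΛlinapp, ← hone]; exact congrArg Λ (by ext y; simp)
  have hlamuniv : rieszContentAux Λlin ⟨univ, isCompact_univ⟩ = 1 := by
    refine le_antisymm (hlamle1 _) ?_
    rw [rieszContentAux]
    refine le_csInf (rieszContentAux_image_nonempty Λlin _) ?_
    rintro b ⟨f2, hf2, rfl⟩
    calc (1 : ℝ≥0) = Λ 1 := hone.symm
    _ ≤ Λ f2.toBoundedContinuousFunction := hmono _ _ fun y => by simpa using hf2 y (mem_univ y)
  have hν1 : ν univ = 1 := by
    have h0 : ν univ = Co.outerMeasure univ := Content.measure_apply Co MeasurableSet.univ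
    have h1 : Co.outerMeasure univ = Co.innerContent ⟨univ, isOpen_univ⟩ :=
      Co.outerMeasure_opens ⟨univ, isOpen_univ⟩
    rw [h0, h1]
    apply le_antisymm
    · simp only [Content.innerContent]
      refine iSup₂_le fun K _ => ?_
      calc (Co K : ℝ≥0∞) ≤ ((1 : ℝ≥0) : ℝ≥0∞) := ENNReal.coe_le_coe.2 (hlamle1 K)
      _ = 1 := ENNReal.coe_one
    · simp only [Content.innerContent]
      have h2 := le_iSup₂ (f := fun (K : Compacts X)
        (_ : (K : Set X) ⊆ ((⟨univ, isOpen_univ⟩ : Opens X) : Set X)) => (Co K : ℝ≥0∞))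
        ⟨univ, isCompact_univ⟩ (subset_rfl)
      refine le_trans (le_of_eq ?_) h2
      rw [show ((Co ⟨univ, isCompact_univ⟩ : ℝ≥0∞))
          = ((rieszContentAux Λlin ⟨univ, isCompact_univ⟩ : ℝ≥0) : ℝ≥0∞) from rfl, hlamuniv,
        ENNReal.coe_one]
  have hTm : Measurable (⇑T) := T.continuous.measurable
  have hmap : MeasurePreserving (⇑T) ν ν := by
    refine ⟨hTm, ?_⟩
    refine Measure.ext fun s hs => ?_
    rw [Measure.map_apply hTm hs]
    rw [show ν = Co.measure from rfl, Content.measure_apply Co (hTm hs),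
      Content.measure_apply Co hs, houter]
  haveI hprob : IsProbabilityMeasure ν := ⟨hν1⟩
  have hνμ : ν = μ := huniq ν hprob hmap
  have hlint : ∀ f : X →ᵇ ℝ≥0, (Λ f : ℝ≥0∞) ≤ ∫⁻ y, (f y : ℝ≥0∞) ∂ν := by
    intro f
    refine ENNReal.le_of_forall_pos_le_add ?_
    intro ε' hε' _
    set δ : ℝ≥0 := min (ε' / 2) 1 with hδdef
    have hδ0 : 0 < δ := lt_min (by positivity) one_pos
    obtain ⟨M, hM⟩ := hsup f
    set Nn : ℕ := ⌈(M / δ : ℝ≥0)⌉₊ + 1 with hNn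
    have hNn0 : (Nn : ℝ≥0) ≠ 0 := Nat.cast_ne_zero.2 (by omega)
    have hMN : M ≤ (Nn : ℝ≥0) * δ := by
      have h1 : (M / δ : ℝ≥0) ≤ ((⌈(M / δ : ℝ≥0)⌉₊ : ℕ) : ℝ≥0) := Nat.le_ceil _
      have h2 : ((⌈(M / δ : ℝ≥0)⌉₊ : ℕ) : ℝ≥0) ≤ (Nn : ℝ≥0) := by
        exact_mod_cast Nat.le_succ _
      exact (div_le_iff₀ hδ0).1 (h1.trans h2)
    set K : ℕ → Compacts X := fun i =>
      ⟨{y | ((i : ℝ≥0) + 1) * δ ≤ f y},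
        (isClosed_le continuous_const f.continuous).isCompact⟩ with hKdef
    set η : ℝ≥0 := δ / Nn with hη
    have hη0 : 0 < η := by
      rw [hη]
      exact div_pos hδ0 (zero_lt_iff.2 hNn0)
    choose gc hgc1 hgc2 using fun i : ℕ => exists_lt_rieszContentAux_add_pos Λlin (K i) hη0
    set gb : ℕ → X →ᵇ ℝ≥0 := fun i => (gc i).toBoundedContinuousFunction with hgb
    have happ : ∀ y, (δ • (1 + ∑ i ∈ Finset.range Nn, gb i)) y
        = δ * (1 + ∑ i ∈ Finset.range Nn, gb i y) := by
      intro y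
      simp [BoundedContinuousFunction.coe_sum, Finset.sum_apply, smul_eq_mul]
      ring
    have hptw : ∀ y, f y ≤ δ * (1 + ∑ i ∈ Finset.range Nn, gb i y) := by
      intro y
      have h1 : f y ≤ δ + ∑ i ∈ Finset.range Nn, (if ((i : ℝ≥0) + 1) * δ ≤ f y then δ else 0) :=
        level_upper δ Nn (f y) ((hM y).trans hMN)
      refine h1.trans ?_
      rw [mul_add, mul_one, Finset.mul_sum]
      refine add_le_add_right (Finset.sum_le_sum fun i _ => ?_) δ
      by_cases hcc : ((i : ℝ≥0) + 1) * δ ≤ f y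
      · rw [if_pos hcc]
        have h2 : (1 : ℝ≥0) ≤ gb i y := hgc1 i y hcc
        calc δ = δ * 1 := (mul_one δ).symm
        _ ≤ δ * gb i y := mul_le_mul_right h2 δ
      · rw [if_neg hcc]
        exact zero_le
    have h2 : Λ f ≤ δ * (1 + ∑ i ∈ Finset.range Nn, Λ (gb i)) := by
      have hmle := hmono f (δ • (1 + ∑ i ∈ Finset.range Nn, gb i))
        (fun y => (hptw y).trans_eq (happ y).symm)
      have hcal : Λ (δ • (1 + ∑ i ∈ Finset.range Nn, gb i))
          = δ * (1 + ∑ i ∈ Finset.range Nn, Λ (gb i)) := by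
        rw [hsmul, hadd, hone]
        have h4 := map_sum Λlin gc (Finset.range Nn)
        have e : (∑ i ∈ Finset.range Nn, gc i).toBoundedContinuousFunction
            = ∑ i ∈ Finset.range Nn, gb i := by
          ext y
          simp [hgb, BoundedContinuousFunction.coe_sum, Finset.sum_apply,
            CompactlySupportedContinuousMap.sum_apply]
        have h5 : Λ (∑ i ∈ Finset.range Nn, gb i) = ∑ i ∈ Finset.range Nn, Λ (gb i) := by
          rw [← e]; exact h4
        rw [h5]
      rwa [hcal] at hmle
    have h3 : ∑ i ∈ Finset.range Nn, Λ (gb i)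
        ≤ (∑ i ∈ Finset.range Nn, rieszContentAux Λlin (K i)) + (Nn : ℝ≥0) * η := by
      calc ∑ i ∈ Finset.range Nn, Λ (gb i)
          ≤ ∑ i ∈ Finset.range Nn, (rieszContentAux Λlin (K i) + η) :=
            Finset.sum_le_sum fun i _ => le_of_lt (hgc2 i)
      _ = _ := by rw [Finset.sum_add_distrib, Finset.sum_const, Finset.card_range, nsmul_eq_mul]
    have hNη : (Nn : ℝ≥0) * η = δ := by
      rw [hη, mul_comm, div_mul_cancel₀ _ hNn0]
    have h5 : ∀ i, (rieszContentAux Λlin (K i) : ℝ≥0∞) ≤ ν (K i) := fun i => by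
      rw [show ν = Co.measure from rfl,
        Content.measure_apply Co (K i).isCompact.isClosed.measurableSet]
      exact Co.le_outerMeasure_compacts (K i)
    have h6 : (δ : ℝ≥0∞) * ∑ i ∈ Finset.range Nn, ν (K i) ≤ ∫⁻ y, (f y : ℝ≥0∞) ∂ν := by
      rw [Finset.mul_sum]
      have hind : ∀ i ∈ Finset.range Nn, (δ : ℝ≥0∞) * ν (K i)
          = ∫⁻ y, ((K i : Set X)).indicator (fun _ => (δ : ℝ≥0∞)) y ∂ν := fun i _ =>
        (lintegral_indicator_const ((K i).isCompact.isClosed.measurableSet) _).symm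
      rw [Finset.sum_congr rfl hind, ← lintegral_finset_sum]
      · refine lintegral_mono fun y => ?_
        have h7 : ∑ i ∈ Finset.range Nn, ((K i : Set X)).indicator (fun _ => (δ : ℝ≥0∞)) y
            = (((∑ i ∈ Finset.range Nn, if ((i : ℝ≥0) + 1) * δ ≤ f y then δ else 0) : ℝ≥0)
                : ℝ≥0∞) := by
          rw [ENNReal.coe_finset_sum]
          refine Finset.sum_congr rfl fun i _ => ?_
          by_cases hcc : ((i : ℝ≥0) + 1) * δ ≤ f y
          · rw [Set.indicator_of_mem (show y ∈ (K i : Set X) from hcc), if_pos hcc]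
          · rw [Set.indicator_of_notMem (show y ∉ (K i : Set X) from hcc), if_neg hcc,
              ENNReal.coe_zero]
        rw [h7]
        exact ENNReal.coe_le_coe.2 (level_lower δ Nn (f y))
      · exact fun i _ => measurable_const.indicator (K i).isCompact.isClosed.measurableSet
    have h9 : Λ f ≤ δ + δ * δ + δ * ∑ i ∈ Finset.range Nn, rieszContentAux Λlin (K i) := by
      refine h2.trans ?_
      calc δ * (1 + ∑ i ∈ Finset.range Nn, Λ (gc i))
          = δ + δ * ∑ i ∈ Finset.range Nn, Λ (gc i) := by ring
      _ ≤ δ + δ * ((∑ i ∈ Finset.range Nn, rieszContentAux Λlin (K i)) + (Nn : ℝ≥0) * η) :=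
            add_le_add_right (mul_le_mul_right h3 δ) δ
      _ = δ + δ * δ + δ * ∑ i ∈ Finset.range Nn, rieszContentAux Λlin (K i) := by
            rw [hNη]; ring
    have h8 : (Λ f : ℝ≥0∞)
        ≤ (δ : ℝ≥0∞) + (δ : ℝ≥0∞) * δ + (δ : ℝ≥0∞) * ∑ i ∈ Finset.range Nn, ν (K i) := by
      calc (Λ f : ℝ≥0∞)
          ≤ (((δ + δ * δ + δ * ∑ i ∈ Finset.range Nn, rieszContentAux Λlin (K i)) : ℝ≥0)
              : ℝ≥0∞) := ENNReal.coe_le_coe.2 h9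
      _ = (δ : ℝ≥0∞) + (δ : ℝ≥0∞) * δ
            + (δ : ℝ≥0∞) * ∑ i ∈ Finset.range Nn, ((rieszContentAux Λlin (K i) : ℝ≥0) : ℝ≥0∞) := by
            push_cast
            ring
      _ ≤ _ := by
            gcongr with i _
            exact h5 i
    have hδε : (δ : ℝ≥0∞) + (δ : ℝ≥0∞) * δ ≤ (ε' : ℝ≥0∞) := by
      have hle : δ + δ * δ ≤ ε' := by
        have ha : δ ≤ ε' / 2 := min_le_left _ _
        have hb : δ ≤ 1 := min_le_right _ _
        calc δ + δ * δ ≤ δ + δ * 1 := add_le_add_right (mul_le_mul_right hb δ) δ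
        _ = δ + δ := by rw [mul_one]
        _ ≤ ε' / 2 + ε' / 2 := add_le_add ha ha
        _ = ε' := add_halves ε'
      exact_mod_cast hle
    calc (Λ f : ℝ≥0∞)
        ≤ (δ : ℝ≥0∞) + (δ : ℝ≥0∞) * δ + (δ : ℝ≥0∞) * ∑ i ∈ Finset.range Nn, ν (K i) := h8
    _ ≤ (δ : ℝ≥0∞) + (δ : ℝ≥0∞) * δ + ∫⁻ y, (f y : ℝ≥0∞) ∂ν := add_le_add_right h6 _
    _ ≤ (ε' : ℝ≥0∞) + ∫⁻ y, (f y : ℝ≥0∞) ∂ν := add_le_add_left hδε _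
    _ = (∫⁻ y, (f y : ℝ≥0∞) ∂ν) + ε' := add_comm _ _
  obtain ⟨w, -, hw⟩ := isCompact_univ.exists_isMinOn univ_nonempty hφ.continuousOn
  set c : ℝ := -φ w with hcdef
  have hφc : ∀ y, 0 ≤ φ y + c := fun y => by
    have h1 : φ w ≤ φ y := hw (mem_univ y)
    simp only [hcdef]
    linarith
  have contf0 : Continuous fun y => Real.toNNReal (φ y + c) :=
    continuous_real_toNNReal.comp (hφ.add continuous_const)
  set f₀ : X →ᵇ ℝ≥0 := mkOfCompact ⟨_, contf0⟩ with hf₀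
  have hf₀app : ∀ y, ((f₀ y : ℝ≥0) : ℝ) = φ y + c := fun y => Real.coe_toNNReal _ (hφc y)
  have hu0 : ∀ k, ∫ y, φ y ∂μ + ε + c ≤ ((u f₀ k : ℝ≥0) : ℝ) := by
    intro k
    have hnkpos : (0 : ℝ) < (n k : ℝ) := by
      exact_mod_cast Nat.cast_pos.2 (by have := hn1 k; omega)
    have hcoe : ((u f₀ k : ℝ≥0) : ℝ)
        = (∑ j ∈ Finset.range (n k), (φ ((⇑T)^[j] (x k)) + c)) / (n k : ℝ) := by
      rw [hu]
      push_cast [NNReal.coe_div, NNReal.coe_sum]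
      congr 1
      exact Finset.sum_congr rfl fun j _ => hf₀app _
    rw [hcoe, le_div_iff₀ hnkpos]
    have hxk := hx k
    have hsplit : ∑ j ∈ Finset.range (n k), (φ ((⇑T)^[j] (x k)) + c)
        = (∑ j ∈ Finset.range (n k), φ ((⇑T)^[j] (x k))) + (n k : ℝ) * c := by
      rw [Finset.sum_add_distrib, Finset.sum_const, Finset.card_range, nsmul_eq_mul]
    rw [hsplit]
    calc (∫ y, φ y ∂μ + ε + c) * (n k : ℝ)
        = (n k : ℝ) * (∫ y, φ y ∂μ + ε) + (n k : ℝ) * c := by ring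
    _ ≤ (∑ j ∈ Finset.range (n k), φ ((⇑T)^[j] (x k))) + (n k : ℝ) * c := by
        linarith [hxk]
  have hcoeT : Tendsto (fun k => ((u f₀ k : ℝ≥0) : ℝ)) (U : Filter ℕ)
      (nhds ((Λ f₀ : ℝ≥0) : ℝ)) := (NNReal.continuous_coe.tendsto _).comp (hΛ f₀)
  have hΛf₀ : ∫ y, φ y ∂μ + ε + c ≤ ((Λ f₀ : ℝ≥0) : ℝ) := ge_of_tendsto' hcoeT hu0
  have hφint : Integrable φ μ := by
    have := (mkOfCompact (⟨φ, hφ⟩ : C(X, ℝ))).integrable μ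
    exact this
  have hintc : Integrable (fun y => φ y + c) μ := hφint.add (integrable_const c)
  have hlil : ∫⁻ y, ((f₀ y : ℝ≥0) : ℝ≥0∞) ∂μ = ENNReal.ofReal ((∫ y, φ y ∂μ) + c) := by
    have h1 : ∫ y, (φ y + c) ∂μ = (∫ y, φ y ∂μ) + c := by
      rw [integral_add hφint (integrable_const c), integral_const]
      simp
    rw [← h1, ofReal_integral_eq_lintegral_ofReal hintc (Eventually.of_forall hφc)]
    exact lintegral_congr fun y => rfl
  have hlfin := hlint f₀
  rw [hνμ] at hlfin
  have hfinal : ENNReal.ofReal ((∫ y, φ y ∂μ) + ε + c)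
      ≤ ENNReal.ofReal ((∫ y, φ y ∂μ) + c) := by
    calc ENNReal.ofReal ((∫ y, φ y ∂μ) + ε + c) ≤ ENNReal.ofReal ((Λ f₀ : ℝ≥0) : ℝ) :=
          ENNReal.ofReal_le_ofReal hΛf₀
    _ = ((Λ f₀ : ℝ≥0) : ℝ≥0∞) := ENNReal.ofReal_coe_nnreal
    _ ≤ ∫⁻ y, ((f₀ y : ℝ≥0) : ℝ≥0∞) ∂μ := hlfin
    _ = ENNReal.ofReal ((∫ y, φ y ∂μ) + c) := hlil
  have hIc : 0 ≤ (∫ y, φ y ∂μ) + c := by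
    have h1 : φ w ≤ ∫ y, φ y ∂μ := by
      have h2 : ∫ (_ : X), φ w ∂μ ≤ ∫ y, φ y ∂μ :=
        integral_mono (integrable_const _) hφint (fun y => hw (mem_univ y))
      simpa using h2
    simp only [hcdef]
    linarith
  have hcontra := (ENNReal.ofReal_le_ofReal_iff hIc).1 hfinal
  linarith

/-- Uniform (in the phase) upper semicontinuity of the Lyapunov exponent in the cocycle,
for continuous subadditive cocycles over a uniquely ergodic homeomorphism of a compact
metric space: for every `ε > 0` there are `N` and `δ > 0` such that any continuous
subadditive cocycle `(g_n)` with `sup_x |g_n(x) - f_n(x)| < δ` for all `n ≤ N` satisfies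
`(1/n) g_n(x) ≤ Λ(f) + ε` for all `n ≥ N` and all `x`. -/
theorem uniform_upper_semicontinuity_lyapunov
    {X : Type*} [MetricSpace X] [CompactSpace X] [MeasurableSpace X] [BorelSpace X]
    (T : X ≃ₜ X) (μ : Measure X) [IsProbabilityMeasure μ]
    (hinv : MeasurePreserving T μ μ)
    (huniq : ∀ ν : Measure X, IsProbabilityMeasure ν → MeasurePreserving T ν ν → ν = μ)
    (f : ℕ → X → ℝ) (hcont : ∀ n, Continuous (f n))
    (hsub : ∀ n m, 1 ≤ n → 1 ≤ m → ∀ x, f (n + m) x ≤ f n x + f m ((⇑T)^[n] x)) :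
    ∀ ε > (0 : ℝ), ∃ (N : ℕ) (δ : ℝ), 0 < δ ∧
      ∀ g : ℕ → X → ℝ, (∀ n, Continuous (g n)) →
        (∀ n m, 1 ≤ n → 1 ≤ m → ∀ x, g (n + m) x ≤ g n x + g m ((⇑T)^[n] x)) →
        (∀ n ≤ N, ∀ x : X, |g n x - f n x| < δ) →
        ∀ n ≥ N, ∀ x : X,
          g n x / n ≤ (⨅ k : ℕ+, (∫ x, f k x ∂μ) / k) + ε := by
  intro ε hε
  set L : ℝ := ⨅ k : ℕ+, (∫ x, f k x ∂μ) / k with hL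
  obtain ⟨k₀, hk₀⟩ : ∃ k : ℕ+, (∫ x, f k x ∂μ) / k < L + ε / 4 :=
    exists_lt_of_ciInf_lt (show L < L + ε / 4 by linarith)
  set m : ℕ := (k₀ : ℕ) with hm
  have hm1 : 1 ≤ m := k₀.2
  have hmpos : (0 : ℝ) < m := by exact_mod_cast k₀.2
  obtain ⟨N₁, hN₁⟩ := key_unif T μ huniq (f m) (hcont m) (m * ε / 4) (by positivity)
  set Cf : ℝ := ∑ l ∈ Finset.range (3 * m + 1), ‖mkOfCompact (⟨f l, hcont l⟩ : C(X, ℝ))‖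
    with hCf
  have hCf0 : 0 ≤ Cf := Finset.sum_nonneg fun l _ => norm_nonneg _
  have hCfb : ∀ l, l ≤ 3 * m → ∀ y, |f l y| ≤ Cf := by
    intro l hl y
    have h1 : |f l y| ≤ ‖mkOfCompact (⟨f l, hcont l⟩ : C(X, ℝ))‖ := by
      have h2 := BoundedContinuousFunction.norm_coe_le_norm
        (mkOfCompact (⟨f l, hcont l⟩ : C(X, ℝ))) y
      simpa [Real.norm_eq_abs] using h2
    refine h1.trans ?_
    exact Finset.single_le_sum (f := fun l => ‖mkOfCompact (⟨f l, hcont l⟩ : C(X, ℝ))‖)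
      (fun i _ => norm_nonneg _) (Finset.mem_range.2 (by omega))
  obtain ⟨N₂, hN₂⟩ := exists_nat_ge (20 * (Cf + 1) / ε)
  refine ⟨max (max (3 * m) N₁) (max N₂ 1), min 1 (m * ε / 4), lt_min one_pos (by positivity), ?_⟩
  intro g hgc hgsub hgclose n hn x
  set N : ℕ := max (max (3 * m) N₁) (max N₂ 1) with hN
  have hmN : 3 * m ≤ N := le_trans (le_max_left _ _) (le_max_left _ _)
  have hn3m : 3 * m ≤ n := le_trans hmN hn
  have hnN1 : N₁ ≤ n := le_trans (le_trans (le_max_right (3 * m) N₁) (le_max_left _ _)) hn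
  have hnN2 : (N₂ : ℝ) ≤ (n : ℝ) := by
    exact_mod_cast le_trans (le_trans (le_max_left N₂ 1) (le_max_right _ _)) hn
  have hn1 : 1 ≤ n := le_trans (le_trans (le_max_right N₂ 1) (le_max_right _ _)) hn
  have hnpos : (0 : ℝ) < n := by exact_mod_cast hn1
  have hδ1 : min 1 (m * ε / 4) ≤ 1 := min_le_left _ _
  have hδ2 : min 1 (m * ε / 4) ≤ m * ε / 4 := min_le_right _ _
  have hCg : ∀ l, 1 ≤ l → l ≤ 3 * m → ∀ z, |g l z| ≤ Cf + 1 := by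
    intro l h1 h3 z
    have hclose := hgclose l (le_trans h3 hmN) z
    have h4 := hCfb l h3 z
    have h5 := abs_sub_abs_le_abs_sub (g l z) (f l z)
    linarith
  have hkey := avg_bound (⇑T) g m hm1 hgsub (Cf + 1)
    (fun l a b y => hCg l a b y) n hn3m x
  have hsumgf : ∑ k ∈ Finset.range n, g m ((⇑T)^[k] x)
      ≤ (∑ k ∈ Finset.range n, f m ((⇑T)^[k] x)) + n * (m * ε / 4) := by
    have h1 : ∀ k ∈ Finset.range n, g m ((⇑T)^[k] x) ≤ f m ((⇑T)^[k] x) + m * ε / 4 := by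
      intro k _
      have h2 := abs_lt.1 (hgclose m (le_trans (by omega) hmN) ((⇑T)^[k] x))
      linarith [h2.2]
    calc ∑ k ∈ Finset.range n, g m ((⇑T)^[k] x)
        ≤ ∑ k ∈ Finset.range n, (f m ((⇑T)^[k] x) + m * ε / 4) := Finset.sum_le_sum h1
    _ = _ := by rw [Finset.sum_add_distrib, Finset.sum_const, Finset.card_range, nsmul_eq_mul]
  have hbirk := hN₁ n hnN1 x
  have hintm : ∫ z, f m z ∂μ ≤ (m : ℝ) * (L + ε / 4) := by
    have h1 := hk₀
    rw [div_lt_iff₀ hmpos] at h1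
    linarith [h1]
  have hn20 : 20 * (Cf + 1) ≤ (n : ℝ) * ε := by
    have h1 : 20 * (Cf + 1) / ε ≤ (n : ℝ) := le_trans hN₂ hnN2
    calc 20 * (Cf + 1) = 20 * (Cf + 1) / ε * ε := by field_simp
    _ ≤ (n : ℝ) * ε := mul_le_mul_of_nonneg_right h1 hε.le
  rw [div_le_iff₀ hnpos]
  have t1 : (n : ℝ) * (∫ z, f m z ∂μ) ≤ (n : ℝ) * ((m : ℝ) * (L + ε / 4)) :=
    mul_le_mul_of_nonneg_left hintm (by positivity)
  have t2 : 5 * (m : ℝ) * (Cf + 1) ≤ (m : ℝ) * ((n : ℝ) * ε / 4) := by nlinarith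
  have hgoal : (m : ℝ) * g n x ≤ (m : ℝ) * ((L + ε) * n) := by nlinarith [hkey, hsumgf, hbirk, t1, t2]
  have h6 := le_of_mul_le_mul_left hgoal hmpos
  linarith

end UUSLAux
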